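/- Let Ā be an m×m complex matrix with operator norm γ = ‖Ā‖ < 1, let B̄ be an m×p, C a q×m, and D a q×p complex matrix, and let z be a complex number with |z| = 1. Define the transfer function H(z) = C (I_m - z^{-1}Ā)^{-1} B̄ + D and its cascade approximation H_N(z) = C ∏_{n=0}^{N} (I_m + (z^{-1}Ā)^{2^n}) B̄ + D. Then for every natural number N, ‖H(z) - H_N(z)‖ ≤ (γ^{2^{N+1}} / (1 - γ)) · ‖C‖ · ‖B̄‖. -/

import Mathlib

open scoped Matrix.Norms.L2Operator

/-- Let `Ā` be an `m × m` complex matrix with operator norm `γ = ‖Ā‖ < 1`, let `B̄`, `C`,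
`D` be `m × p`, `q × m`, `q × p` complex matrices, and let `z` be a complex number with
`|z| = 1`.  With the transfer function `H(z) = C (I_m - z⁻¹Ā)⁻¹ B̄ + D` and its cascade
approximation `H_N(z) = C ∏_{n=0}^{N} (I_m + (z⁻¹Ā)^(2^n)) B̄ + D`, for every natural
number `N` one has `‖H(z) - H_N(z)‖ ≤ (γ^(2^(N+1)) / (1 - γ)) * ‖C‖ * ‖B̄‖`.
All norms are the operator norms induced by the Euclidean norms. -/
theorem transfer_function_cascade_bound {m p q : ℕ}
    (Abar : Matrix (Fin m) (Fin m) ℂ) (Bbar : Matrix (Fin m) (Fin p) ℂ)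
    (C : Matrix (Fin q) (Fin m) ℂ) (D : Matrix (Fin q) (Fin p) ℂ)
    (γ : ℝ) (hγ : γ = ‖Abar‖) (hγ1 : γ < 1)
    (z : ℂ) (hz : ‖z‖ = 1) (N : ℕ)
    (H HN : Matrix (Fin q) (Fin p) ℂ)
    (hH : H = C * (1 - z⁻¹ • Abar)⁻¹ * Bbar + D)
    (hHN : HN = C * (((List.range (N + 1)).map
        (fun n => 1 + (z⁻¹ • Abar) ^ 2 ^ n)).prod) * Bbar + D) :
    ‖H - HN‖ ≤ γ ^ 2 ^ (N + 1) / (1 - γ) * ‖C‖ * ‖Bbar‖ := by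
  set A : Matrix (Fin m) (Fin m) ℂ := z⁻¹ • Abar with hA
  have hγ0 : 0 ≤ γ := hγ ▸ norm_nonneg _
  have h1γ : (0:ℝ) < 1 - γ := by linarith
  have hAnorm : ‖A‖ = γ := by
    rw [hA, norm_smul, norm_inv, hz, inv_one, one_mul, hγ]
  have hA1 : ‖A‖ < 1 := by rw [hAnorm]; exact hγ1
  have hsq : ∀ M : ℕ, (1 - A ^ M) * (1 + A ^ M) = 1 - A ^ (M * 2) := by
    intro M; rw [pow_mul, pow_two]; noncomm_ring
  -- product identity
  have key : ∀ M : ℕ, (1 - A) * (((List.range (M + 1)).map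
      (fun n => 1 + A ^ 2 ^ n)).prod) = 1 - A ^ 2 ^ (M + 1) := by
    intro M
    induction M with
    | zero =>
      have := hsq 1
      simp only [pow_one] at this
      simpa [List.range_succ] using this
    | succ k ih =>
      rw [List.range_succ, List.map_append, List.prod_append]
      simp only [List.map_cons, List.map_nil, List.prod_cons, List.prod_nil, mul_one]
      rw [← mul_assoc, ih, pow_succ 2 (k + 1), hsq]
  have hUnit : IsUnit (1 - A) := (Units.oneSub A hA1).isUnit
  have hinv : (1 - A)⁻¹ = Ring.inverse (1 - A) := Matrix.nonsing_inv_eq_ringInverse _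
  set P : Matrix (Fin m) (Fin m) ℂ := ((List.range (N + 1)).map
      (fun n => 1 + A ^ 2 ^ n)).prod with hP
  have hdiff : (1 - A)⁻¹ - P = (1 - A)⁻¹ * A ^ 2 ^ (N + 1) := by
    have h1 : P = (1 - A)⁻¹ * (1 - A ^ 2 ^ (N + 1)) := by
      rw [← key N, ← mul_assoc, hinv, Ring.inverse_mul_cancel _ hUnit, one_mul]
    rw [h1, mul_sub, mul_one, sub_sub_cancel]
  have hHdiff : H - HN = C * ((1 - A)⁻¹ * A ^ 2 ^ (N + 1)) * Bbar := by
    rw [hH, hHN, add_sub_add_right_eq_sub, Matrix.mul_assoc C, Matrix.mul_assoc C, ← Matrix.mul_sub, ← Matrix.sub_mul, hdiff, ← Matrix.mul_assoc]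
  -- powers bound
  have hone : ‖(1 : Matrix (Fin m) (Fin m) ℂ)‖ ≤ 1 := by
    have h := CStarRing.norm_star_mul_self (x := (1 : Matrix (Fin m) (Fin m) ℂ))
    simp only [star_one, one_mul] at h
    nlinarith [norm_nonneg (1 : Matrix (Fin m) (Fin m) ℂ)]
  have hpow : ∀ n : ℕ, ‖A ^ n‖ ≤ γ ^ n := by
    intro n
    induction n with
    | zero => simpa using hone
    | succ k ih =>
      calc ‖A ^ (k + 1)‖ = ‖A ^ k * A‖ := by rw [pow_succ]
        _ ≤ ‖A ^ k‖ * ‖A‖ := norm_mul_le _ _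
        _ ≤ γ ^ k * γ := by
            apply mul_le_mul ih (le_of_eq hAnorm) (norm_nonneg _) (pow_nonneg hγ0 k)
        _ = γ ^ (k + 1) := (pow_succ γ k).symm
  have hsum : Summable (fun n : ℕ => ‖A ^ n‖) :=
    (summable_geometric_of_lt_one hγ0 hγ1).of_nonneg_of_le (fun _ => norm_nonneg _) hpow
  have hinvbound : ‖(1 - A)⁻¹‖ ≤ (1 - γ)⁻¹ := by
    rw [hinv, ← geom_series_eq_inverse A hA1]
    calc ‖∑' n : ℕ, A ^ n‖ ≤ ∑' n : ℕ, ‖A ^ n‖ := norm_tsum_le_tsum_norm hsum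
      _ ≤ ∑' n : ℕ, γ ^ n :=
          Summable.tsum_le_tsum hpow hsum (summable_geometric_of_lt_one hγ0 hγ1)
      _ = (1 - γ)⁻¹ := tsum_geometric_of_lt_one hγ0 hγ1
  rw [hHdiff]
  have hX : ‖(1 - A)⁻¹ * A ^ 2 ^ (N + 1)‖ ≤ γ ^ 2 ^ (N + 1) / (1 - γ) := by
    calc ‖(1 - A)⁻¹ * A ^ 2 ^ (N + 1)‖ ≤ ‖(1 - A)⁻¹‖ * ‖A ^ 2 ^ (N + 1)‖ :=
          norm_mul_le _ _
      _ ≤ (1 - γ)⁻¹ * γ ^ 2 ^ (N + 1) := by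
          apply mul_le_mul hinvbound (hpow _) (norm_nonneg _) (by positivity)
      _ = γ ^ 2 ^ (N + 1) / (1 - γ) := by rw [div_eq_mul_inv, mul_comm]
  calc ‖C * ((1 - A)⁻¹ * A ^ 2 ^ (N + 1)) * Bbar‖
      ≤ ‖C * ((1 - A)⁻¹ * A ^ 2 ^ (N + 1))‖ * ‖Bbar‖ := Matrix.l2_opNorm_mul _ _
    _ ≤ ‖C‖ * ‖(1 - A)⁻¹ * A ^ 2 ^ (N + 1)‖ * ‖Bbar‖ := by
        apply mul_le_mul_of_nonneg_right (Matrix.l2_opNorm_mul _ _) (norm_nonneg _)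
    _ ≤ ‖C‖ * (γ ^ 2 ^ (N + 1) / (1 - γ)) * ‖Bbar‖ := by
        apply mul_le_mul_of_nonneg_right _ (norm_nonneg _)
        exact mul_le_mul_of_nonneg_left hX (norm_nonneg _)
    _ = γ ^ 2 ^ (N + 1) / (1 - γ) * ‖C‖ * ‖Bbar‖ := by ring
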